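/- arXiv:0909.3764 — 2 statements merged into one kernel-verified Lean document; each statement's English description precedes it below -/
import Mathlib

section
/- Assume Λ({0}) = 0 and that u ↦ ∫_{[u,1]} x^{-2} Λ(dx) is regularly varying at 0 with index -β for some β ∈ (0,1). Then the total coalescence rate g_n = ∫_{(0,1]} (1 - (1-x)^n - n x (1-x)^{n-1}) x^{-2} Λ(dx) satisfies g_n ~ Γ(2-β) ∫_{[1/n,1]} x^{-2} Λ(dx) as n → ∞. -/
open MeasureTheory Filter Set Real
open scoped ENNReal

namespace Stmt18Aux

noncomputable def m (Λ : Measure ℝ) (u : ℝ) : ℝ≥0∞ :=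
  ∫⁻ x in Set.Icc u 1, ENNReal.ofReal ((x ^ 2)⁻¹) ∂Λ

noncomputable def F (Λ : Measure ℝ) (u : ℝ) : ℝ := (m Λ u).toReal

lemma m_anti (Λ : Measure ℝ) : Antitone (m Λ) := fun _ _ huv =>
  lintegral_mono_set (Set.Icc_subset_Icc_left huv)

lemma m_meas (Λ : Measure ℝ) : Measurable (m Λ) := (m_anti Λ).measurable

lemma F_meas (Λ : Measure ℝ) : Measurable (F Λ) :=
  ENNReal.measurable_toReal.comp (m_meas Λ)

lemma m_lt_top (Λ : Measure ℝ) [IsFiniteMeasure Λ] {u : ℝ} (hu : 0 < u) : m Λ u < ⊤ := by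
  have hb : ∀ x ∈ Set.Icc u 1, ENNReal.ofReal ((x ^ 2)⁻¹) ≤ ENNReal.ofReal ((u ^ 2)⁻¹) := by
    intro x hx
    apply ENNReal.ofReal_le_ofReal
    have h1 : 0 < u ^ 2 := by positivity
    have h2 : u ^ 2 ≤ x ^ 2 := by nlinarith [hx.1, hx.2]
    exact inv_anti₀ h1 h2
  calc m Λ u ≤ ∫⁻ _ in Set.Icc u 1, ENNReal.ofReal ((u ^ 2)⁻¹) ∂Λ := by
        exact setLIntegral_mono measurable_const hb
    _ = ENNReal.ofReal ((u ^ 2)⁻¹) * Λ (Set.Icc u 1) := by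
        rw [setLIntegral_const]
    _ < ⊤ := ENNReal.mul_lt_top ENNReal.ofReal_lt_top (measure_lt_top Λ _)

lemma F_eq (Λ : Measure ℝ) (u : ℝ) : F Λ u = ∫ x in Set.Icc u 1, (x ^ 2)⁻¹ ∂Λ := by
  rw [integral_eq_lintegral_of_nonneg_ae]
  · rfl
  · exact ae_of_all _ fun x => by positivity
  · exact (Measurable.aestronglyMeasurable (by measurability))

lemma F_nonneg (Λ : Measure ℝ) (u : ℝ) : 0 ≤ F Λ u := ENNReal.toReal_nonneg

lemma F_anti (Λ : Measure ℝ) [IsFiniteMeasure Λ] {u v : ℝ} (hu : 0 < u) (huv : u ≤ v) :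
    F Λ v ≤ F Λ u :=
  ENNReal.toReal_mono (m_lt_top Λ hu).ne (m_anti Λ huv)

noncomputable def hh (m : ℕ) (t : ℝ) : ℝ := ((m : ℝ) + 2) * ((m : ℝ) + 1) * t * (1 - t) ^ m

noncomputable def phi (m : ℕ) (x : ℝ) : ℝ :=
  1 - (1 - x) ^ (m + 2) - ((m : ℝ) + 2) * x * (1 - x) ^ (m + 1)

lemma hh_cont (m : ℕ) : Continuous (hh m) := by
  unfold hh; continuity

lemma phi_cont (m : ℕ) : Continuous (phi m) := by
  unfold phi; continuity

lemma hasDerivAt_phi (m : ℕ) (t : ℝ) : HasDerivAt (phi m) (hh m t) t := by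
  have h1 : HasDerivAt (fun t : ℝ => 1 - t) (-1) t := by
    simpa using (hasDerivAt_id t).const_sub 1
  have h2 : HasDerivAt (fun t : ℝ => (1 - t) ^ (m + 2))
      (((m : ℝ) + 2) * (1 - t) ^ (m + 1) * (-1)) t := by
    have := h1.fun_pow (m + 2)
    norm_num at this ⊢
    convert this using 2
  have h3 : HasDerivAt (fun t : ℝ => (1 - t) ^ (m + 1))
      (((m : ℝ) + 1) * (1 - t) ^ m * (-1)) t := by
    have := h1.fun_pow (m + 1)
    norm_num at this ⊢
    convert this using 2
  have h4 : HasDerivAt (fun t : ℝ => ((m : ℝ) + 2) * t * (1 - t) ^ (m + 1))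
      (((m : ℝ) + 2) * (1 - t) ^ (m + 1)
        + ((m : ℝ) + 2) * t * (((m : ℝ) + 1) * (1 - t) ^ m * (-1))) t := by
    have h5 : HasDerivAt (fun t : ℝ => ((m : ℝ) + 2) * t) ((m : ℝ) + 2) t := by
      simpa using (hasDerivAt_id t).const_mul ((m : ℝ) + 2)
    simpa using h5.fun_mul h3
  have h6 := ((h2.const_sub 1).fun_sub h4)
  refine h6.congr_deriv ?_
  unfold hh; ring

lemma phi_eq (m : ℕ) (x : ℝ) : phi m x = ∫ t in (0:ℝ)..x, hh m t := by
  have := intervalIntegral.integral_eq_sub_of_hasDerivAt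
    (f := phi m) (f' := hh m) (a := 0) (b := x)
    (fun t _ => hasDerivAt_phi m t) ((hh_cont m).intervalIntegrable 0 x)
  rw [this]
  simp [phi]

lemma hh_nonneg (m : ℕ) {t : ℝ} (h0 : 0 ≤ t) (h1 : t ≤ 1) : 0 ≤ hh m t := by
  unfold hh
  have : (0:ℝ) ≤ 1 - t := by linarith
  positivity

lemma phi_nonneg (m : ℕ) {x : ℝ} (h0 : 0 ≤ x) (h1 : x ≤ 1) : 0 ≤ phi m x := by
  rw [phi_eq]
  apply intervalIntegral.integral_nonneg h0
  intro t ht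
  exact hh_nonneg m ht.1 (le_trans ht.2 h1)

-- The Fubini/Tonelli identity
set_option maxHeartbeats 1000000 in
lemma key_identity (Λ : Measure ℝ) [IsFiniteMeasure Λ] (k : ℕ) :
    ∫ x in Set.Ioc (0:ℝ) 1, phi k x * (x ^ 2)⁻¹ ∂Λ
      = ∫ t in Set.Ioo (0:ℝ) 1, hh k t * F Λ t := by
  -- inner FTC in ENNReal form
  have hinner : ∀ x ∈ Set.Ioc (0:ℝ) 1, ENNReal.ofReal (phi k x)
      = ∫⁻ t in Set.Ioi 0, (Set.Iic x).indicator (fun t => ENNReal.ofReal (hh k t)) t := by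
    intro x hx
    rw [lintegral_indicator measurableSet_Iic, Measure.restrict_restrict measurableSet_Iic]
    have hset : Set.Iic x ∩ Set.Ioi 0 = Set.Ioc 0 x := by
      ext t; simp [Set.mem_Ioc, Set.mem_Iic, Set.mem_Ioi, and_comm]
    rw [hset]
    rw [← ofReal_integral_eq_lintegral_ofReal ((hh_cont k).integrableOn_Ioc)]
    · congr 1
      rw [← intervalIntegral.integral_of_le hx.1.le, ← phi_eq]
    · rw [EventuallyLE, ae_restrict_iff' measurableSet_Ioc]
      exact ae_of_all _ fun t ht => hh_nonneg k ht.1.le (le_trans ht.2 hx.2)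
  set bigF : ℝ × ℝ → ℝ≥0∞ := fun p =>
    ({q : ℝ × ℝ | q.2 ≤ q.1}.indicator
      (fun q => ENNReal.ofReal (hh k q.2) * ENNReal.ofReal ((q.1 ^ 2)⁻¹)) p) with hbigF
  have hbigF_meas : Measurable bigF := by
    apply Measurable.indicator
    · exact (((hh_cont k).measurable.comp measurable_snd).ennreal_ofReal).mul
        ((((measurable_fst.pow_const 2).inv).ennreal_ofReal))
    · exact measurableSet_le measurable_snd measurable_fst
  have L1eq : (∫⁻ x in Set.Ioc (0:ℝ) 1, ENNReal.ofReal (phi k x * (x ^ 2)⁻¹) ∂Λ)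
      = ∫⁻ t in Set.Ioo (0:ℝ) 1, ENNReal.ofReal (hh k t) * m Λ t := by
    calc (∫⁻ x in Set.Ioc (0:ℝ) 1, ENNReal.ofReal (phi k x * (x ^ 2)⁻¹) ∂Λ)
        = ∫⁻ x in Set.Ioc (0:ℝ) 1, ∫⁻ t in Set.Ioi 0, bigF (x, t) ∂volume ∂Λ := by
          apply setLIntegral_congr_fun measurableSet_Ioc
          intro x hx
          dsimp only
          rw [ENNReal.ofReal_mul (phi_nonneg k hx.1.le hx.2), hinner x hx]
          rw [← lintegral_mul_const _ (Measurable.indicator ((hh_cont k).measurable.ennreal_ofReal) measurableSet_Iic)]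
          congr 1 with t
          by_cases h : t ≤ x
          · simp [hbigF, h, Set.indicator_of_mem, Set.mem_setOf_eq]
          · simp [hbigF, h]
      _ = ∫⁻ t in Set.Ioi 0, ∫⁻ x in Set.Ioc (0:ℝ) 1, bigF (x, t) ∂Λ ∂volume := by
          apply lintegral_lintegral_swap
          exact hbigF_meas.aemeasurable
      _ = ∫⁻ t in Set.Ioi 0, ENNReal.ofReal (hh k t) * m Λ t ∂volume := by
          apply setLIntegral_congr_fun measurableSet_Ioi
          intro t ht
          have hpt : ∀ x : ℝ, bigF (x, t)
              = (Set.Ici t).indicator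
                  (fun x => ENNReal.ofReal (hh k t) * ENNReal.ofReal ((x ^ 2)⁻¹)) x := by
            intro x
            by_cases h : t ≤ x
            · simp [hbigF, h, Set.indicator_of_mem, Set.mem_setOf_eq, Set.mem_Ici]
            · simp [hbigF, h]
          simp_rw [hpt]
          rw [lintegral_indicator measurableSet_Ici, Measure.restrict_restrict measurableSet_Ici]
          have hset : Set.Ici t ∩ Set.Ioc 0 1 = Set.Icc t 1 := by
            ext y
            simp only [Set.mem_inter_iff, Set.mem_Ici, Set.mem_Ioc, Set.mem_Icc]
            constructor
            · rintro ⟨h1, _, h3⟩; exact ⟨h1, h3⟩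
            · rintro ⟨h1, h2⟩; exact ⟨h1, lt_of_lt_of_le ht h1, h2⟩
          rw [hset, lintegral_const_mul (f := fun x : ℝ => ENNReal.ofReal ((x ^ 2)⁻¹)) _
            ((measurable_id'.pow_const 2).inv.ennreal_ofReal)]
          rfl
      _ = ∫⁻ t in Set.Ioo (0:ℝ) 1, ENNReal.ofReal (hh k t) * m Λ t ∂volume := by
          have hsplit : Set.Ioi (0:ℝ) = Set.Ioo (0:ℝ) 1 ∪ Set.Ici 1 := by
            ext t
            simp only [Set.mem_Ioi, Set.mem_union, Set.mem_Ioo, Set.mem_Ici]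
            constructor
            · intro h
              by_cases h1 : t < 1
              · exact Or.inl ⟨h, h1⟩
              · exact Or.inr (le_of_not_gt h1)
            · rintro (⟨h, _⟩ | h)
              · exact h
              · linarith
          rw [hsplit, lintegral_union measurableSet_Ici]
          · have hz : (∫⁻ t in Set.Ici (1:ℝ), ENNReal.ofReal (hh k t) * m Λ t ∂volume) = 0 := by
              rw [← setLIntegral_congr (Ioi_ae_eq_Ici (a := (1:ℝ)))]
              rw [setLIntegral_congr_fun measurableSet_Ioi
                (fun t (ht : t ∈ Set.Ioi (1:ℝ)) => ?_), lintegral_zero]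
              have : Set.Icc t 1 = ∅ := Set.Icc_eq_empty (by exact not_le.2 ht)
              unfold m
              rw [this, Measure.restrict_empty, lintegral_zero_measure, mul_zero]
            rw [hz, add_zero]
          · rw [Set.disjoint_left]
            rintro a ⟨_, h1⟩ h2
            exact absurd (Set.mem_Ici.1 h2) (not_le.2 h1)
  -- convert both sides
  rw [integral_eq_lintegral_of_nonneg_ae, integral_eq_lintegral_of_nonneg_ae]
  · rw [L1eq]
    congr 1
    apply setLIntegral_congr_fun measurableSet_Ioo
    intro t ht
    dsimp only
    rw [ENNReal.ofReal_mul (hh_nonneg k ht.1.le ht.2.le)]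
    congr 1
    exact (ENNReal.ofReal_toReal (m_lt_top Λ ht.1).ne).symm
  · rw [EventuallyLE, ae_restrict_iff' measurableSet_Ioo]
    exact ae_of_all _ fun t ht =>
      mul_nonneg (hh_nonneg k ht.1.le ht.2.le) (F_nonneg Λ t)
  · exact (((hh_cont k).measurable.mul (F_meas Λ)).aestronglyMeasurable)
  · rw [EventuallyLE, ae_restrict_iff' measurableSet_Ioc]
    exact ae_of_all _ fun x hx =>
      mul_nonneg (phi_nonneg k hx.1.le hx.2) (by positivity)
  · exact (((phi_cont k).measurable.mul ((measurable_id.pow_const 2).inv)).aestronglyMeasurable)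

lemma scale_bound (Λ : Measure ℝ) [IsFiniteMeasure Λ] {β : ℝ} (hβ : 0 < β) (hβ1 : β < 1)
    (hreg2 : Tendsto (fun u => F Λ (2⁻¹ * u) / F Λ u) (nhdsWithin 0 (Set.Ioi 0))
      (nhds ((2⁻¹ : ℝ) ^ (-β))))
    (hreg2' : Tendsto (fun u => F Λ (2 * u) / F Λ u) (nhdsWithin 0 (Set.Ioi 0))
      (nhds ((2 : ℝ) ^ (-β)))) :
    ∃ u₁ > 0, (∀ u ∈ Set.Ioc (0:ℝ) u₁, 0 < F Λ u) ∧
      ∀ u ∈ Set.Ioc (0:ℝ) u₁, ∀ s ∈ Set.Ioc (0:ℝ) 1,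
        F Λ (s * u) ≤ 4 ^ ((1+β)/2) * s ^ (-((1+β)/2)) * F Λ u := by
  set b' : ℝ := (1+β)/2 with hb'
  have hb'pos : 0 < b' := by rw [hb']; linarith
  have hβb' : β < b' := by rw [hb']; linarith
  set K : ℝ := (2:ℝ) ^ b' with hK
  have hKpos : 0 < K := rpow_pos_of_pos two_pos _
  -- 2^β < K
  have hlt : (2⁻¹ : ℝ) ^ (-β) < K := by
    rw [hK, Real.inv_rpow two_pos.le, ← Real.rpow_neg two_pos.le, neg_neg]
    exact Real.rpow_lt_rpow_left_iff one_lt_two |>.2 hβb'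
  have hdb := hreg2.eventually_lt_const hlt
  rw [eventually_nhdsWithin_iff] at hdb
  rw [Metric.eventually_nhds_iff] at hdb
  obtain ⟨δ₀, hδ₀pos, hδ₀⟩ := hdb
  have hdb' : ∀ u ∈ Set.Ioo (0:ℝ) δ₀, F Λ (2⁻¹ * u) / F Λ u < K := by
    intro u hu
    exact hδ₀ (by rw [Real.dist_eq, sub_zero, abs_of_pos hu.1]; exact hu.2) hu.1
  -- positivity of F somewhere
  have hex : ∃ u₁ ∈ Set.Ioo (0:ℝ) δ₀, 0 < F Λ u₁ := by
    by_contra hc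
    push_neg at hc
    have hzero : ∀ u ∈ Set.Ioo (0:ℝ) δ₀, F Λ u = 0 := fun u hu =>
      le_antisymm (hc u hu) (F_nonneg Λ u)
    have hev : ∀ᶠ u in nhdsWithin 0 (Set.Ioi 0), F Λ (2 * u) / F Λ u = 0 := by
      filter_upwards [Ioo_mem_nhdsGT hδ₀pos] with u hu
      rw [hzero u hu, div_zero]
    have : Tendsto (fun _ : ℝ => (0:ℝ)) (nhdsWithin 0 (Set.Ioi 0)) (nhds ((2:ℝ) ^ (-β))) :=
      Tendsto.congr' hev hreg2'
    have h0 := tendsto_nhds_unique this tendsto_const_nhds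
    exact (ne_of_gt (rpow_pos_of_pos two_pos (-β))) h0
  obtain ⟨u₁, hu₁mem, hu₁pos⟩ := hex
  refine ⟨u₁, hu₁mem.1, ?_, ?_⟩
  · intro u hu
    exact lt_of_lt_of_le hu₁pos (F_anti Λ hu.1 hu.2)
  have hFpos : ∀ u ∈ Set.Ioc (0:ℝ) u₁, 0 < F Λ u := fun u hu =>
    lt_of_lt_of_le hu₁pos (F_anti Λ hu.1 hu.2)
  -- doubling
  have hdouble : ∀ u ∈ Set.Ioc (0:ℝ) u₁, F Λ (u / 2) ≤ K * F Λ u := by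
    intro u hu
    have h1 : F Λ (2⁻¹ * u) / F Λ u < K :=
      hdb' u ⟨hu.1, lt_of_le_of_lt hu.2 hu₁mem.2⟩
    have h2 := (div_lt_iff₀ (hFpos u hu)).1 h1
    rw [div_eq_inv_mul]
    linarith
  -- iterated doubling
  have hiter : ∀ j : ℕ, ∀ u ∈ Set.Ioc (0:ℝ) u₁, F Λ (u / 2 ^ j) ≤ K ^ j * F Λ u := by
    intro j
    induction j with
    | zero => intro u hu; simp
    | succ j ih =>
      intro u hu
      have hu2 : u / 2 ^ j ∈ Set.Ioc (0:ℝ) u₁ := by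
        constructor
        · exact div_pos hu.1 (by positivity)
        · calc u / 2 ^ j ≤ u := by
                apply div_le_self hu.1.le
                exact one_le_pow₀ one_le_two
            _ ≤ u₁ := hu.2
      have h1 : F Λ (u / 2 ^ (j+1)) = F Λ ((u / 2 ^ j) / 2) := by
        ring_nf
      rw [h1]
      calc F Λ ((u / 2 ^ j) / 2) ≤ K * F Λ (u / 2 ^ j) := hdouble _ hu2
        _ ≤ K * (K ^ j * F Λ u) := by
            exact mul_le_mul_of_nonneg_left (ih u hu) hKpos.le
        _ = K ^ (j+1) * F Λ u := by ring
  -- final bound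
  intro u hu s hs
  set j : ℕ := Nat.floor (Real.logb 2 s⁻¹) with hj
  have hs_inv : 1 ≤ s⁻¹ := (one_le_inv₀ hs.1).mpr hs.2
  have hlogb : 0 ≤ Real.logb 2 s⁻¹ := Real.logb_nonneg one_lt_two hs_inv
  have h1 : (j : ℝ) ≤ Real.logb 2 s⁻¹ := Nat.floor_le hlogb
  have h2 : Real.logb 2 s⁻¹ < (j : ℝ) + 1 := Nat.lt_floor_add_one _
  -- 2^(j+1) > s⁻¹
  have h3 : s⁻¹ < (2:ℝ) ^ (j+1) := by
    have : s⁻¹ = (2:ℝ) ^ (Real.logb 2 s⁻¹) := (Real.rpow_logb two_pos (by norm_num)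
      (inv_pos.2 hs.1)).symm
    rw [this, ← Real.rpow_natCast (2:ℝ) (j+1)]
    apply Real.rpow_lt_rpow_left_iff one_lt_two |>.2
    push_cast
    exact h2
  have h4 : u / 2 ^ (j+1) ≤ s * u := by
    rw [div_eq_mul_inv, mul_comm u]
    apply mul_le_mul_of_nonneg_right _ hu.1.le
    rw [inv_le_comm₀ (by positivity) hs.1]
    exact h3.le
  have h5 : F Λ (s * u) ≤ K ^ (j+1) * F Λ u := by
    calc F Λ (s * u) ≤ F Λ (u / 2 ^ (j+1)) :=
          F_anti Λ (div_pos hu.1 (by positivity)) h4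
      _ ≤ K ^ (j+1) * F Λ u := hiter (j+1) u hu
  have h6 : K ^ (j+1) ≤ 4 ^ b' * s ^ (-b') := by
    have e1 : K ^ (j+1) = (2:ℝ) ^ (b' * ((j:ℝ)+1)) := by
      rw [hK, ← Real.rpow_natCast ((2:ℝ)^b') (j+1), ← Real.rpow_mul two_pos.le]
      push_cast
      ring_nf
    have e2 : b' * ((j:ℝ)+1) ≤ b' * (Real.logb 2 s⁻¹ + 2) := by
      apply mul_le_mul_of_nonneg_left _ hb'pos.le
      linarith
    have e3 : (2:ℝ) ^ (b' * (Real.logb 2 s⁻¹ + 2)) = 4 ^ b' * s ^ (-b') := by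
      have hL : (2:ℝ) ^ (Real.logb 2 s⁻¹) = s⁻¹ :=
        Real.rpow_logb two_pos (by norm_num) (inv_pos.2 hs.1)
      have hsplit : b' * (Real.logb 2 s⁻¹ + 2) = Real.logb 2 s⁻¹ * b' + 2 * b' := by ring
      have h4b : (2:ℝ) ^ (2 * b') = 4 ^ b' := by
        have h22 : ((2:ℝ) ^ (2:ℝ)) = 4 := by
          rw [show (2:ℝ) = ((2:ℕ):ℝ) from by norm_num, Real.rpow_natCast]
          norm_num
        rw [show (2:ℝ) * b' = (2:ℝ) * b' from rfl, ← h22, ← Real.rpow_mul two_pos.le]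
      rw [hsplit, Real.rpow_add two_pos, Real.rpow_mul two_pos.le, hL,
        Real.inv_rpow hs.1.le, ← Real.rpow_neg hs.1.le, h4b]
      ring
    calc K ^ (j+1) = (2:ℝ) ^ (b' * ((j:ℝ)+1)) := e1
      _ ≤ (2:ℝ) ^ (b' * (Real.logb 2 s⁻¹ + 2)) :=
          Real.rpow_le_rpow_of_exponent_le one_le_two e2
      _ = 4 ^ b' * s ^ (-b') := e3
  calc F Λ (s * u) ≤ K ^ (j+1) * F Λ u := h5
    _ ≤ 4 ^ b' * s ^ (-b') * F Λ u :=
        mul_le_mul_of_nonneg_right h6 (F_nonneg Λ _)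

end Stmt18Aux

open Stmt18Aux

set_option maxHeartbeats 2000000 in
theorem stmt18 (Λ : Measure ℝ) [IsFiniteMeasure Λ]
    (hsupp : Λ (Set.Icc (0:ℝ) 1)ᶜ = 0) (h0 : Λ {0} = 0)
    (β : ℝ) (hβ : 0 < β) (hβ1 : β < 1)
    (hreg : ∀ c > (0:ℝ), Tendsto
      (fun u : ℝ => (∫ x in Set.Icc (c * u) 1, (x ^ 2)⁻¹ ∂Λ)
        / (∫ x in Set.Icc u 1, (x ^ 2)⁻¹ ∂Λ))
      (nhdsWithin 0 (Set.Ioi 0)) (nhds (c ^ (-β)))) :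
    Tendsto (fun n : ℕ =>
        (∫ x in Set.Ioc (0:ℝ) 1, (1 - (1 - x) ^ n - (n : ℝ) * x * (1 - x) ^ (n - 1)) / x ^ 2 ∂Λ)
          / (Real.Gamma (2 - β) * ∫ x in Set.Icc ((n : ℝ)⁻¹) 1, (x ^ 2)⁻¹ ∂Λ))
      atTop (nhds 1) := by
  classical
  have hΓpos : 0 < Real.Gamma (2 - β) := Real.Gamma_pos_of_pos (by linarith)
  have hregF : ∀ c > (0:ℝ), Tendsto (fun u => F Λ (c * u) / F Λ u)
      (nhdsWithin 0 (Set.Ioi 0)) (nhds (c ^ (-β))) := by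
    intro c hc
    have h := hreg c hc
    simp_rw [← F_eq] at h
    exact h
  obtain ⟨u₁, hu₁pos, hFpos, hbound⟩ :=
    scale_bound Λ hβ hβ1 (hregF 2⁻¹ (by norm_num)) (hregF 2 two_pos)
  set b' : ℝ := (1 + β) / 2 with hb'
  have hb'pos : 0 < b' := by rw [hb']; linarith
  have hb'lt : b' < 1 := by rw [hb']; linarith
  set C₀ : ℝ := (4:ℝ) ^ ((1 + β) / 2) with hC₀
  have hC₀pos : 0 < C₀ := Real.rpow_pos_of_pos (by norm_num) _
  -- choice of shift M
  set M : ℕ := max 2 (Nat.ceil u₁⁻¹) with hM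
  have hM2 : 2 ≤ M := le_max_left _ _
  have hMu : u₁⁻¹ ≤ (M : ℝ) :=
    le_trans (Nat.le_ceil _) (by exact_mod_cast le_max_right 2 (Nat.ceil u₁⁻¹))
  -- definitions
  set ψ : ℕ → ℝ → ℝ := fun j =>
    Set.indicator (Set.Ioo (0:ℝ) 1) (fun t => hh j t * F Λ t) with hψ
  set X : ℕ → ℝ → ℝ := fun j s =>
    ((((j:ℝ) + 2)⁻¹) * ψ j (s / ((j:ℝ) + 2))) / F Λ (((j:ℝ) + 2)⁻¹) with hX
  set q : ℕ → ℝ := fun j =>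
    (∫ t in Set.Ioo (0:ℝ) 1, hh j t * F Λ t) / F Λ (((j:ℝ) + 2)⁻¹) with hq
  have hψnn : ∀ j t, 0 ≤ ψ j t := by
    intro j t
    apply Set.indicator_nonneg
    intro t ht
    exact mul_nonneg (hh_nonneg _ ht.1.le ht.2.le) (F_nonneg Λ t)
  have hψmeas : ∀ j, Measurable (ψ j) := fun j =>
    Measurable.indicator ((hh_cont j).measurable.mul (F_meas Λ)) measurableSet_Ioo
  -- substitution
  have hsub : ∀ j : ℕ, q j = ∫ s in Set.Ioi (0:ℝ), X j s := by
    intro j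
    have hnpos : (0:ℝ) < (j:ℝ) + 2 := by positivity
    have h1 : (∫ t in Set.Ioo (0:ℝ) 1, hh j t * F Λ t) = ∫ t, ψ j t :=
      (integral_indicator measurableSet_Ioo).symm
    have h2 := MeasureTheory.Measure.integral_comp_div (ψ j) ((j:ℝ) + 2)
    rw [abs_of_pos hnpos, smul_eq_mul] at h2
    have h3 : (∫ s in Set.Ioi (0:ℝ), X j s) = ∫ s, X j s := by
      apply setIntegral_eq_integral_of_forall_compl_eq_zero
      intro s hsmem
      have hs0 : s ≤ 0 := not_lt.1 hsmem
      have : ψ j (s / ((j:ℝ) + 2)) = 0 := by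
        apply Set.indicator_of_notMem
        simp only [Set.mem_Ioo, not_and]
        intro hpos
        exact absurd hpos (not_lt.2 (div_nonpos_of_nonpos_of_nonneg hs0 hnpos.le))
      simp [hX, this]
    have h4 : (∫ s, X j s)
        = (F Λ (((j:ℝ) + 2)⁻¹))⁻¹ * ((((j:ℝ) + 2)⁻¹) * ∫ s, ψ j (s / ((j:ℝ) + 2))) := by
      rw [← integral_const_mul, ← integral_const_mul]
      congr 1 with s
      simp only [hX]
      field_simp
    rw [h3, h4, h2]
    simp only [hq]
    rw [h1]
    field_simp
  -- closed form
  have hXform : ∀ (j : ℕ) (s : ℝ), 0 < s → s / ((j:ℝ) + 2) < 1 →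
      X j s = (s * (((j:ℝ) + 1) / ((j:ℝ) + 2))) * (1 - s / ((j:ℝ) + 2)) ^ j
        * (F Λ (s * ((j:ℝ) + 2)⁻¹) / F Λ (((j:ℝ) + 2)⁻¹)) := by
    intro j s hs hlt
    have hnpos : (0:ℝ) < (j:ℝ) + 2 := by positivity
    have hmem : s / ((j:ℝ) + 2) ∈ Set.Ioo (0:ℝ) 1 := ⟨div_pos hs hnpos, hlt⟩
    simp only [hX, hψ, Set.indicator_of_mem hmem, hh]
    rw [div_eq_mul_inv s ((j:ℝ) + 2)]
    rw [div_eq_mul_inv _ (F Λ (((j:ℝ) + 2)⁻¹)), div_eq_mul_inv (F Λ (s * ((j:ℝ) + 2)⁻¹)) _,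
      div_eq_mul_inv ((j:ℝ) + 1) _]
    have key : (((j:ℝ) + 2)⁻¹) * ((j:ℝ) + 2) = 1 := inv_mul_cancel₀ hnpos.ne'
    linear_combination (((j:ℝ) + 1) * s * (((j:ℝ) + 2)⁻¹) * ((1 - s * ((j:ℝ) + 2)⁻¹) ^ j)
      * F Λ (s * ((j:ℝ) + 2)⁻¹) * (F Λ (((j:ℝ) + 2)⁻¹))⁻¹) * key
  -- the limit function and its integral
  set flim : ℝ → ℝ := fun s => Real.exp (-s) * s ^ (1 - β) with hflim
  have hΓeq : (∫ s in Set.Ioi (0:ℝ), flim s) = Real.Gamma (2 - β) := by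
    rw [Real.Gamma_eq_integral (by linarith : (0:ℝ) < 2 - β)]
    have : (2:ℝ) - β - 1 = 1 - β := by ring
    rw [this]
  -- bound function
  set bound : ℝ → ℝ := fun s =>
    C₀ * (s ^ (1 - b') * Real.exp (-(2⁻¹) * s)) + s ^ (1:ℝ) * Real.exp (-(2⁻¹) * s)
    with hbnd
  have base : ∀ σ : ℝ, -1 < σ →
      IntegrableOn (fun x : ℝ => x ^ σ * Real.exp (-(2⁻¹) * x)) (Set.Ioi 0) := by
    intro σ hσ
    have := integrableOn_rpow_mul_exp_neg_mul_rpow hσ zero_lt_one (show (0:ℝ) < 2⁻¹ by norm_num)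
    simpa [Real.rpow_one] using this
  have hbound_int : IntegrableOn bound (Set.Ioi 0) :=
    ((base (1 - b') (by linarith)).const_mul C₀).add (base 1 (by norm_num))
  have hbound_nonneg : ∀ s : ℝ, 0 < s → 0 ≤ bound s := by
    intro s hs
    have h1 : (0:ℝ) ≤ s ^ (1 - b') := Real.rpow_nonneg hs.le _
    have h2 : (0:ℝ) ≤ s ^ (1:ℝ) := Real.rpow_nonneg hs.le _
    positivity
  -- measurability of X j
  have hXmeas : ∀ j : ℕ, AEStronglyMeasurable (X j) (volume.restrict (Set.Ioi (0:ℝ))) := by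
    intro j
    apply Measurable.aestronglyMeasurable
    apply Measurable.div_const
    exact ((hψmeas j).comp (measurable_id.div_const _)).const_mul _
  -- domination
  have h_bd : ∀ k : ℕ, ∀ᵐ s ∂(volume.restrict (Set.Ioi (0:ℝ))), ‖X (k + M) s‖ ≤ bound s := by
    intro k
    rw [ae_restrict_iff' measurableSet_Ioi]
    apply ae_of_all
    intro s hs
    replace hs : (0:ℝ) < s := hs
    set j : ℕ := k + M with hj
    have hjM : (M:ℝ) ≤ (j:ℝ) := by exact_mod_cast Nat.le_add_left M k
    have hj2 : (2:ℝ) ≤ (j:ℝ) := le_trans (by exact_mod_cast hM2) hjM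
    set n : ℝ := (j:ℝ) + 2 with hn
    have hnpos : (0:ℝ) < n := by positivity
    have hninv : n⁻¹ ≤ u₁ := by
      rw [inv_le_comm₀ hnpos hu₁pos]
      calc u₁⁻¹ ≤ (M:ℝ) := hMu
        _ ≤ n := by rw [hn]; linarith
    have hFn : 0 < F Λ n⁻¹ := hFpos _ ⟨inv_pos.2 hnpos, hninv⟩
    have hXnn : 0 ≤ X j s := by
      apply div_nonneg _ (F_nonneg Λ _)
      exact mul_nonneg (by positivity) (hψnn j _)
    rw [Real.norm_eq_abs, abs_of_nonneg hXnn]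
    by_cases hcase : s / n < 1
    · rw [hXform j s hs hcase]
      have h0b : (0:ℝ) ≤ 1 - s / n := by linarith
      have hA : s * (((j:ℝ) + 1) / n) ≤ s := by
        apply mul_le_of_le_one_right hs.le
        rw [div_le_one hnpos]
        linarith
      have hAnn : 0 ≤ s * (((j:ℝ) + 1) / n) := by positivity
      have hB : (1 - s / n) ^ j ≤ Real.exp (-(2⁻¹) * s) := by
        have h1b : 1 - s / n ≤ Real.exp (-(s / n)) := by
          have := Real.add_one_le_exp (-(s / n))
          linarith
        calc (1 - s / n) ^ j ≤ (Real.exp (-(s / n))) ^ j := pow_le_pow_left₀ h0b h1b j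
          _ = Real.exp ((j:ℝ) * (-(s / n))) := by rw [← Real.exp_nat_mul]
          _ ≤ Real.exp (-(2⁻¹) * s) := by
              apply Real.exp_le_exp.2
              rw [mul_neg, neg_mul, neg_le_neg_iff, mul_div_assoc', le_div_iff₀ hnpos]
              have hnn : n = (j:ℝ) + 2 := hn
              nlinarith [mul_nonneg (show (0:ℝ) ≤ (j:ℝ) - 2 by linarith) hs.le]
      have hBnn : 0 ≤ (1 - s / n) ^ j := pow_nonneg h0b j
      have hC : F Λ (s * n⁻¹) / F Λ n⁻¹ ≤ C₀ * s ^ (-b') + 1 := by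
        rcases le_or_gt s 1 with hs1 | hs1
        · rw [div_le_iff₀ hFn]
          calc F Λ (s * n⁻¹) ≤ C₀ * s ^ (-b') * F Λ n⁻¹ :=
                hbound n⁻¹ ⟨inv_pos.2 hnpos, hninv⟩ s ⟨hs, hs1⟩
            _ ≤ (C₀ * s ^ (-b') + 1) * F Λ n⁻¹ := by nlinarith
        · rw [div_le_iff₀ hFn]
          have hle : F Λ (s * n⁻¹) ≤ F Λ n⁻¹ := by
            apply F_anti Λ (inv_pos.2 hnpos)
            nlinarith [inv_pos.2 hnpos]
          have hrp : (0:ℝ) ≤ C₀ * s ^ (-b') := by positivity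
          nlinarith
      have hCnn : 0 ≤ F Λ (s * n⁻¹) / F Λ n⁻¹ :=
        div_nonneg (F_nonneg Λ _) (F_nonneg Λ _)
      calc (s * (((j:ℝ) + 1) / n)) * (1 - s / n) ^ j * (F Λ (s * n⁻¹) / F Λ n⁻¹)
          ≤ (s * Real.exp (-(2⁻¹) * s)) * (C₀ * s ^ (-b') + 1) := by
            apply mul_le_mul _ hC hCnn (by positivity)
            exact mul_le_mul hA hB hBnn hs.le
        _ = bound s := by
            simp only [hbnd]
            have hss : s ^ ((1:ℝ) - b') = s ^ (1:ℝ) * s ^ (-b') := by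
              rw [← Real.rpow_add hs]; ring_nf
            rw [hss, Real.rpow_one]
            ring
    · have hz : ψ j (s / n) = 0 := by
        apply Set.indicator_of_notMem
        simp only [Set.mem_Ioo, not_and]
        intro _
        exact hcase
      have : X j s = 0 := by simp [hX, ← hn, hz]
      rw [this]
      exact hbound_nonneg s hs
  -- pointwise convergence
  have h_lim : ∀ᵐ s ∂(volume.restrict (Set.Ioi (0:ℝ))),
      Tendsto (fun k : ℕ => X (k + M) s) atTop (nhds (flim s)) := by
    rw [ae_restrict_iff' measurableSet_Ioi]
    apply ae_of_all
    intro s hs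
    replace hs : (0:ℝ) < s := hs
    set n : ℕ → ℝ := fun k => ((k + M : ℕ) : ℝ) + 2 with hnk
    have hn_top : Tendsto n atTop atTop := by
      apply tendsto_atTop_add_const_right
      exact tendsto_natCast_atTop_atTop.comp (tendsto_add_atTop_nat M)
    have hnpos : ∀ k, (0:ℝ) < n k := fun k => by positivity
    -- C1
    have hC1 : Tendsto (fun k => (((k + M : ℕ) : ℝ) + 1) / n k) atTop (nhds 1) := by
      have he : ∀ k, (((k + M : ℕ) : ℝ) + 1) / n k = 1 - (n k)⁻¹ := by
        intro k
        rw [eq_sub_iff_add_eq, hnk]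
        field_simp
        push_cast
        ring
      simp_rw [he]
      simpa using tendsto_const_nhds.sub hn_top.inv_tendsto_atTop
    -- C2
    have hbase : Tendsto (fun k => 1 - s / n k) atTop (nhds 1) := by
      simpa using tendsto_const_nhds.sub (tendsto_const_nhds.div_atTop hn_top)
    have hfull : Tendsto (fun k => (1 - s / n k) ^ ((k + M : ℕ) + 2)) atTop
        (nhds (Real.exp (-s))) := by
      have hcomp := (Real.tendsto_one_add_div_pow_exp (-s)).comp (tendsto_add_atTop_nat (M + 2))
      apply hcomp.congr
      intro k
      simp only [Function.comp_apply]
      have h1 : (k + (M + 2) : ℕ) = (k + M) + 2 := by omega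
      rw [h1]
      congr 1
      rw [hnk]
      push_cast
      ring
    have hC2 : Tendsto (fun k => (1 - s / n k) ^ (k + M : ℕ)) atTop
        (nhds (Real.exp (-s))) := by
      have hne : ∀ᶠ k in atTop, (1 - s / n k) ≠ 0 := hbase.eventually_ne one_ne_zero
      have hdiv : Tendsto (fun k => (1 - s / n k) ^ ((k + M : ℕ) + 2) / (1 - s / n k) ^ 2)
          atTop (nhds (Real.exp (-s))) := by
        have := hfull.div (hbase.pow 2) (by norm_num)
        rw [one_pow, div_one] at this
        exact this
      apply hdiv.congr'
      filter_upwards [hne] with k hk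
      rw [pow_add, mul_div_assoc, div_self (pow_ne_zero 2 hk), mul_one]
    -- C3
    have hC3 : Tendsto (fun k => F Λ (s * (n k)⁻¹) / F Λ ((n k)⁻¹)) atTop
        (nhds (s ^ (-β))) := by
      apply (hregF s hs).comp
      apply tendsto_nhdsWithin_of_tendsto_nhds_of_eventually_within
      · exact hn_top.inv_tendsto_atTop
      · exact Eventually.of_forall fun k => inv_pos.2 (hnpos k)
    -- product
    have hprod : Tendsto (fun k =>
        (s * ((((k + M : ℕ) : ℝ) + 1) / n k)) * (1 - s / n k) ^ (k + M : ℕ)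
          * (F Λ (s * (n k)⁻¹) / F Λ ((n k)⁻¹))) atTop
        (nhds ((s * 1) * Real.exp (-s) * s ^ (-β))) :=
      ((tendsto_const_nhds.mul hC1).mul hC2).mul hC3
    have hval : (s * 1) * Real.exp (-s) * s ^ (-β) = flim s := by
      simp only [hflim, mul_one]
      have hss : s ^ ((1:ℝ) - β) = s * s ^ (-β) := by
        rw [show (1:ℝ) - β = 1 + -β by ring, Real.rpow_add hs, Real.rpow_one]
      rw [hss]
      ring
    rw [← hval]
    -- eventual equality
    have hev : ∀ᶠ k in atTop, X (k + M) s
        = (s * ((((k + M : ℕ) : ℝ) + 1) / n k)) * (1 - s / n k) ^ (k + M : ℕ)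
          * (F Λ (s * (n k)⁻¹) / F Λ ((n k)⁻¹)) := by
      filter_upwards [hn_top.eventually_gt_atTop s] with k hk
      have hlt : s / n k < 1 := (div_lt_one (hnpos k)).2 hk
      rw [hXform (k + M) s hs hlt]
    exact Tendsto.congr' (EventuallyEq.symm hev) hprod
  -- apply dominated convergence
  have hDCT := tendsto_integral_of_dominated_convergence
    (μ := volume.restrict (Set.Ioi (0:ℝ))) (f := flim)
    bound (fun k => hXmeas (k + M)) hbound_int h_bd h_lim
  rw [hΓeq] at hDCT
  have hqM : Tendsto (fun k => q (k + M)) atTop (nhds (Real.Gamma (2 - β))) := by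
    apply hDCT.congr
    intro k
    exact (hsub (k + M)).symm
  have hqtend : Tendsto q atTop (nhds (Real.Gamma (2 - β))) :=
    (tendsto_add_atTop_iff_nat M).1 hqM
  have hq1 : Tendsto (fun j => q j / Real.Gamma (2 - β)) atTop (nhds 1) := by
    have := hqtend.div_const (Real.Gamma (2 - β))
    rwa [div_self hΓpos.ne'] at this
  rw [← tendsto_add_atTop_iff_nat 2]
  apply hq1.congr
  intro j
  have hnum : (∫ x in Set.Ioc (0:ℝ) 1,
      (1 - (1 - x) ^ (j + 2) - ((j + 2 : ℕ) : ℝ) * x * (1 - x) ^ ((j + 2) - 1)) / x ^ 2 ∂Λ)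
      = ∫ t in Set.Ioo (0:ℝ) 1, hh j t * F Λ t := by
    rw [← key_identity Λ j]
    apply integral_congr_ae
    apply ae_of_all
    intro x
    simp only [phi, div_eq_mul_inv]
    push_cast
    ring
  have hcast : ((j + 2 : ℕ) : ℝ)⁻¹ = ((j:ℝ) + 2)⁻¹ := by push_cast; ring_nf
  show q j / Real.Gamma (2 - β) = _
  rw [hnum, ← F_eq, hcast, hq]
  rw [div_div, mul_comm]
end

section
/- Let ξ be a subordinator with Laplace exponent ψ (so E[e^{-λ ξ_t}] = e^{-t ψ(λ)}), let γ > 0, and set σ = ∫_0^∞ e^{-γ ξ_r} dr. Then for every positive integer p, E[σ^p] = p! / ∏_{i=1}^p ψ(γ i). -/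
open MeasureTheory ProbabilityTheory
open scoped ENNReal

/-- `e^{-l·x}` for `x ∈ [0,∞]`, with the convention `e^{-l·∞} = 0` (killed subordinator). -/
noncomputable def killedExp (l : ℝ) (x : ℝ≥0∞) : ℝ :=
  if x = ⊤ then 0 else Real.exp (-l * x.toReal)

open MeasureTheory ProbabilityTheory Set Filter Real Topology
open scoped ENNReal

private lemma se_measurable_tail {f : ℝ → ℝ≥0∞} (hf : Measurable f) :
    Measurable fun t : ℝ => ∫⁻ s in Ioi t, f s := by
  have h : ∀ t : ℝ, ∫⁻ s in Ioi t, f s = ∫⁻ s, (Ioi t).indicator f s := fun t =>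
    (lintegral_indicator measurableSet_Ioi f).symm
  simp_rw [h]
  apply Measurable.lintegral_prod_right' (f := fun p : ℝ × ℝ => (Ioi p.1).indicator f p.2)
  simp_rw [Set.indicator_apply, mem_Ioi]
  exact Measurable.ite (measurableSet_lt measurable_fst measurable_snd)
    (hf.comp measurable_snd) measurable_const

private lemma se_measurable_mid {f : ℝ → ℝ≥0∞} (hf : Measurable f) (a : ℝ) :
    Measurable fun s : ℝ => ∫⁻ t in Ioo a s, f t := by
  have h : ∀ s : ℝ, ∫⁻ t in Ioo a s, f t = ∫⁻ t, (Ioo a s).indicator f t := fun s =>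
    (lintegral_indicator measurableSet_Ioo f).symm
  simp_rw [h]
  apply Measurable.lintegral_prod_right' (f := fun p : ℝ × ℝ => (Ioo a p.1).indicator f p.2)
  simp_rw [Set.indicator_apply, mem_Ioo]
  refine Measurable.ite ?_ (hf.comp measurable_snd) measurable_const
  exact (measurableSet_lt measurable_const measurable_snd).inter
    (measurableSet_lt measurable_snd measurable_fst)

private lemma se_pow_succ_eq {f : ℝ → ℝ≥0∞} (hf : Measurable f) :
    ∀ (n : ℕ) (a : ℝ),
      ((n : ℝ≥0∞) + 1) * ∫⁻ t in Ioi a, f t * (∫⁻ s in Ioi t, f s) ^ n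
        = (∫⁻ t in Ioi a, f t) ^ (n + 1) := by
  intro n
  induction n with
  | zero => intro a; simp
  | succ n IH =>
    intro a
    set T : ℝ → ℝ≥0∞ := fun t => ∫⁻ s in Ioi t, f s with hT
    have hn1 : ((n : ℝ≥0∞) + 1) ≠ ⊤ := by simp
    have hTmeas : Measurable T := se_measurable_tail hf
    have hgmeas : ∀ m : ℕ, Measurable fun s => f s * T s ^ m := fun m =>
      hf.mul (hTmeas.pow_const m)
    -- decomposition : for a < s, T a = ∫_{Ioo a s} f + T s
    have hdecomp : ∀ s : ℝ, a < s → T a = (∫⁻ t in Ioo a s, f t) + T s := by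
      intro s hs
      have h1 : Ioo a s ∪ Ici s = Ioi a := Ioo_union_Ici_eq_Ioi hs
      have h2 : Disjoint (Ioo a s) (Ici s) :=
        Set.disjoint_left.2 fun x hx hx' => absurd hx.2 (not_lt.2 hx')
      have h3 : ∫⁻ t in Ici s, f t = T s := by
        rw [hT]; rw [← MeasureTheory.restrict_Ioi_eq_restrict_Ici]
      calc T a = ∫⁻ t in Ioo a s ∪ Ici s, f t := by rw [h1]
        _ = (∫⁻ t in Ioo a s, f t) + ∫⁻ t in Ici s, f t :=
            lintegral_union measurableSet_Ici h2
        _ = (∫⁻ t in Ioo a s, f t) + T s := by rw [h3]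
    set B : ℝ≥0∞ := ∫⁻ s in Ioi a, (∫⁻ t in Ioo a s, f t) * (f s * T s ^ n) with hB
    -- swap computation for B
    have hBswap : ((n : ℝ≥0∞) + 1) * B = ∫⁻ t in Ioi a, f t * T t ^ (n + 1) := by
      have e1 : B = ∫⁻ s in Ioi a, ∫⁻ t, (Ioo a s).indicator f t * (f s * T s ^ n) := by
        refine setLIntegral_congr_fun measurableSet_Ioi (fun s _ => ?_)
        rw [lintegral_mul_const _ ((hf.indicator measurableSet_Ioo)),
          lintegral_indicator measurableSet_Ioo]
      have e2 : (fun (s t : ℝ) => (Ioo a s).indicator f t * (f s * T s ^ n))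
          = fun s t => (Ioi a).indicator f t *
              ((Ioi t).indicator (fun u => f u * T u ^ n) s) := by
        funext s t
        simp only [Set.indicator_apply, mem_Ioo, mem_Ioi]
        by_cases h1 : a < t <;> by_cases h2 : t < s <;> simp [h1, h2, mul_comm]
      have e3 : B = ∫⁻ t, ∫⁻ s in Ioi a,
          (Ioi a).indicator f t * ((Ioi t).indicator (fun u => f u * T u ^ n) s) := by
        rw [e1]
        simp_rw [congrFun (congrFun e2 _) _]
        refine lintegral_lintegral_swap ?_
        apply Measurable.aemeasurable
        apply Measurable.mul
        · exact (hf.indicator measurableSet_Ioi).comp measurable_snd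
        · simp_rw [Set.indicator_apply, mem_Ioi]
          exact Measurable.ite (measurableSet_lt measurable_snd measurable_fst)
            ((hgmeas n).comp measurable_fst) measurable_const
      have e4 : B = ∫⁻ t in Ioi a, f t * ∫⁻ s in Ioi t, f s * T s ^ n := by
        rw [e3, ← lintegral_indicator measurableSet_Ioi]
        congr 1
        funext t
        rw [lintegral_const_mul _ (((hgmeas n).indicator measurableSet_Ioi)),
          lintegral_indicator measurableSet_Ioi, Measure.restrict_restrict measurableSet_Ioi]
        by_cases ht : t ∈ Ioi a
        · rw [Set.inter_eq_left.2 (Ioi_subset_Ioi (le_of_lt ht)),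
            Set.indicator_of_mem ht, Set.indicator_of_mem ht]
        · rw [Set.indicator_of_notMem ht, Set.indicator_of_notMem ht]; simp
      have hmeas2 : Measurable fun t => f t * ∫⁻ s in Ioi t, f s * T s ^ n :=
        hf.mul (se_measurable_tail (hgmeas n))
      rw [e4, ← lintegral_const_mul _ hmeas2]
      refine setLIntegral_congr_fun measurableSet_Ioi (fun t _ => ?_)
      rw [mul_left_comm, IH t]
    -- main chain
    have main : (T a) ^ (n + 1 + 1)
        = ((n : ℝ≥0∞) + 1) * B + ((n : ℝ≥0∞) + 1) * ∫⁻ s in Ioi a, f s * T s ^ (n + 1) := by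
      have c1 : (T a) ^ (n + 1 + 1) = T a * T a ^ (n + 1) := by ring
      rw [c1, ← IH a, ← mul_assoc, mul_comm (T a) ((n : ℝ≥0∞) + 1), mul_assoc,
        ← lintegral_const_mul _ (hgmeas n), ← mul_add]
      congr 1
      rw [hB, ← lintegral_add_left (f := fun s => (∫⁻ t in Ioo a s, f t) * (f s * T s ^ n))
        ((se_measurable_mid hf a).mul (hgmeas n))]
      refine setLIntegral_congr_fun measurableSet_Ioi (fun s hs => ?_)
      rw [hdecomp s hs, add_mul]
      congr 1
      show T s * (f s * T s ^ n) = f s * T s ^ (n + 1)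
      ring
    rw [main, hBswap]
    have hc : ((n + 1 : ℕ) : ℝ≥0∞) + 1 = 1 + ((n : ℝ≥0∞) + 1) := by push_cast; ring
    rw [hc, add_mul, one_mul]

noncomputable def se_ge (l : ℝ) (x : ℝ≥0∞) : ℝ≥0∞ := ENNReal.ofReal (killedExp l x)

lemma se_killedExp_nonneg (l : ℝ) (x : ℝ≥0∞) : 0 ≤ killedExp l x := by
  unfold killedExp; split
  · rfl
  · exact (Real.exp_pos _).le

lemma se_killedExp_le_one {l : ℝ} (hl : 0 ≤ l) (x : ℝ≥0∞) : killedExp l x ≤ 1 := by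
  unfold killedExp; split
  · exact zero_le_one
  · rw [← Real.exp_zero]
    apply Real.exp_le_exp.2
    have : 0 ≤ l * x.toReal := mul_nonneg hl ENNReal.toReal_nonneg
    linarith

lemma se_measurable_killedExp (l : ℝ) : Measurable (killedExp l) := by
  unfold killedExp
  refine Measurable.ite (measurableSet_singleton ⊤) measurable_const ?_
  exact Real.measurable_exp.comp (ENNReal.measurable_toReal.const_mul (-l))

lemma se_measurable_ge (l : ℝ) : Measurable (se_ge l) :=
  ENNReal.measurable_ofReal.comp (se_measurable_killedExp l)

lemma se_ge_top (l : ℝ) : se_ge l ⊤ = 0 := by simp [se_ge, killedExp]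

lemma se_ge_zero' (l : ℝ) : se_ge l 0 = 1 := by
  simp [se_ge, killedExp]

lemma se_ge_ofReal {l : ℝ} {x : ℝ≥0∞} (hx : x ≠ ⊤) :
    se_ge l x = ENNReal.ofReal (Real.exp (-l * x.toReal)) := by
  simp [se_ge, killedExp, hx]

lemma se_ge_ne_top (l : ℝ) (x : ℝ≥0∞) : se_ge l x ≠ ⊤ := ENNReal.ofReal_ne_top

lemma se_ge_pow (l : ℝ) (x : ℝ≥0∞) (n : ℕ) (hn : n ≠ 0) :
    se_ge l x ^ n = se_ge (l * n) x := by
  by_cases hx : x = ⊤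
  · rw [hx, se_ge_top, se_ge_top, zero_pow hn]
  · rw [se_ge_ofReal hx, se_ge_ofReal hx, ← ENNReal.ofReal_pow (Real.exp_pos _).le,
      ← Real.exp_nat_mul]
    ring_nf

lemma se_ge_chain (l : ℝ) {a b c : ℝ≥0∞} (hab : a ≤ b) (hbc : b ≤ c) :
    se_ge l (b - a) * se_ge l (c - b) = se_ge l (c - a) := by
  by_cases hb : b = ⊤
  · have hc : c = ⊤ := top_le_iff.1 (hb ▸ hbc)
    by_cases ha : a = ⊤
    · subst ha hb hc; simp [se_ge_zero']
    · subst hb hc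
      simp [ENNReal.top_sub ha, se_ge_top]
  · have ha : a ≠ ⊤ := fun h => hb (top_le_iff.1 (h ▸ hab))
    by_cases hc : c = ⊤
    · subst hc
      simp [ENNReal.top_sub ha, ENNReal.top_sub hb, se_ge_top]
    · have h1 : b - a ≠ ⊤ := fun h => hb (by simpa using ENNReal.sub_eq_top_iff.1 h |>.1)
      have h2 : c - b ≠ ⊤ := fun h => hc (by simpa using ENNReal.sub_eq_top_iff.1 h |>.1)
      have h3 : c - a ≠ ⊤ := fun h => hc (by simpa using ENNReal.sub_eq_top_iff.1 h |>.1)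
      rw [se_ge_ofReal h1, se_ge_ofReal h2, se_ge_ofReal h3,
        ← ENNReal.ofReal_mul (Real.exp_pos _).le, ← Real.exp_add,
        ENNReal.toReal_sub_of_le hab hb, ENNReal.toReal_sub_of_le hbc hc,
        ENNReal.toReal_sub_of_le (hab.trans hbc) hc]
      ring_nf

noncomputable def se_J {Ω : Type*} (Z : ℝ → Ω → ℝ≥0∞) (γ : ℝ) : ℕ → ℝ → Ω → ℝ≥0∞
  | 0 => fun _ _ => 1
  | n + 1 => fun t ω =>
      ∫⁻ s in Ioi t, se_ge (γ * (n + 1)) (Z s ω - Z t ω) * se_J Z γ n s ω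

lemma se_J_measurable {Ω : Type*} [MeasurableSpace Ω] {Z : ℝ → Ω → ℝ≥0∞}
    (hZ : Measurable fun p : ℝ × Ω => Z p.1 p.2) (γ : ℝ) :
    ∀ n, Measurable fun p : ℝ × Ω => se_J Z γ n p.1 p.2 := by
  intro n
  induction n with
  | zero => simpa [se_J] using measurable_const
  | succ n IH =>
    have h : ∀ p : ℝ × Ω, se_J Z γ (n + 1) p.1 p.2
        = ∫⁻ s, (Ioi p.1).indicator
            (fun s => se_ge (γ * (n + 1)) (Z s p.2 - Z p.1 p.2) * se_J Z γ n s p.2) s := by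
      intro p
      rw [lintegral_indicator measurableSet_Ioi]
      rfl
    simp_rw [h]
    apply Measurable.lintegral_prod_right' (f := fun q : (ℝ × Ω) × ℝ =>
      (Ioi q.1.1).indicator
        (fun s => se_ge (γ * (n + 1)) (Z s q.1.2 - Z q.1.1 q.1.2) * se_J Z γ n s q.1.2) q.2)
    simp_rw [Set.indicator_apply, mem_Ioi]
    refine Measurable.ite (measurableSet_lt (measurable_fst.comp measurable_fst) measurable_snd)
      (Measurable.mul ?_ ?_) measurable_const
    · apply (se_measurable_ge _).comp
      exact Measurable.sub
        (hZ.comp (measurable_snd.prodMk (measurable_snd.comp measurable_fst)))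
        (hZ.comp ((measurable_fst.comp measurable_fst).prodMk
          (measurable_snd.comp measurable_fst)))
    · exact IH.comp (measurable_snd.prodMk (measurable_snd.comp measurable_fst))

lemma se_J_eq_pow {Ω : Type*} [MeasurableSpace Ω] {Z : ℝ → Ω → ℝ≥0∞}
    (hZ : Measurable fun p : ℝ × Ω => Z p.1 p.2) (γ : ℝ) {ω : Ω}
    (hmono : ∀ u v : ℝ, 0 ≤ u → u ≤ v → Z u ω ≤ Z v ω) :
    ∀ n, ∀ t : ℝ, 0 ≤ t →
      (n.factorial : ℝ≥0∞) * se_J Z γ n t ω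
        = (∫⁻ s in Ioi t, se_ge γ (Z s ω - Z t ω)) ^ n := by
  intro n
  induction n with
  | zero => intro t _; simp [se_J]
  | succ n IH =>
    intro t ht
    have hZsec : Measurable fun s : ℝ => Z s ω := hZ.comp (measurable_id.prodMk measurable_const)
    set f : ℝ → ℝ≥0∞ := fun s => se_ge γ (Z s ω - Z t ω) with hf
    have hfm : Measurable f := (se_measurable_ge γ).comp (hZsec.sub measurable_const)
    have htail : ∀ s : ℝ, t < s →
        ∫⁻ u in Ioi s, f u = f s * ∫⁻ u in Ioi s, se_ge γ (Z u ω - Z s ω) := by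
      intro s hs
      have hgm : Measurable fun u : ℝ => se_ge γ (Z u ω - Z s ω) :=
        (se_measurable_ge γ).comp (hZsec.sub measurable_const)
      rw [← lintegral_const_mul _ hgm]
      refine setLIntegral_congr_fun measurableSet_Ioi (fun u hu => ?_)
      exact (se_ge_chain γ (hmono t s ht hs.le) (hmono s u (ht.trans hs.le) (le_of_lt hu))).symm
    have hstepB : (n.factorial : ℝ≥0∞) * se_J Z γ (n + 1) t ω
        = ∫⁻ s in Ioi t, f s * (∫⁻ u in Ioi s, f u) ^ n := by
      show (n.factorial : ℝ≥0∞) * ∫⁻ s in Ioi t,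
          se_ge (γ * (n + 1)) (Z s ω - Z t ω) * se_J Z γ n s ω = _
      rw [← lintegral_const_mul' _ _ (ENNReal.natCast_ne_top _)]
      refine setLIntegral_congr_fun measurableSet_Ioi (fun s hs => ?_)
      rw [← mul_assoc, mul_comm (n.factorial : ℝ≥0∞), mul_assoc, IH s (ht.trans hs.le),
        htail s hs]
      have hpow : se_ge (γ * (n + 1)) (Z s ω - Z t ω) = f s ^ (n + 1) := by
        rw [se_ge_pow γ _ (n + 1) n.succ_ne_zero]; push_cast; ring_nf
      rw [hpow]; ring
    have hfact : (((n + 1).factorial : ℕ) : ℝ≥0∞) = ((n : ℝ≥0∞) + 1) * (n.factorial : ℝ≥0∞) := by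
      rw [Nat.factorial_succ]; push_cast; ring
    calc (((n + 1).factorial : ℕ) : ℝ≥0∞) * se_J Z γ (n + 1) t ω
        = ((n : ℝ≥0∞) + 1) * ((n.factorial : ℝ≥0∞) * se_J Z γ (n + 1) t ω) := by
          rw [hfact, mul_assoc]
      _ = ((n : ℝ≥0∞) + 1) * ∫⁻ s in Ioi t, f s * (∫⁻ u in Ioi s, f u) ^ n := by rw [hstepB]
      _ = (∫⁻ s in Ioi t, f s) ^ (n + 1) := se_pow_succ_eq hfm n t

private lemma se_lintegral_exp (t : ℝ) {a : ℝ} (ha : 0 < a) :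
    ∫⁻ s in Ioi t, ENNReal.ofReal (Real.exp (-(s - t) * a)) = ENNReal.ofReal a⁻¹ := by
  have hint : IntegrableOn (fun s => Real.exp (-(s - t) * a)) (Ioi t) := by
    have h1 := (exp_neg_integrableOn_Ioi t ha).const_mul (Real.exp (t * a))
    refine h1.congr ?_
    filter_upwards [self_mem_ae_restrict measurableSet_Ioi] with s _
    rw [← Real.exp_add]; ring_nf
  have hval : ∫ s in Ioi t, Real.exp (-(s - t) * a) = a⁻¹ := by
    have hderiv : ∀ x ∈ Ioi t,
        HasDerivAt (fun s => -a⁻¹ * Real.exp (-(s - t) * a)) (Real.exp (-(x - t) * a)) x := by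
      intro x _
      have hd : HasDerivAt (fun s : ℝ => -(s - t) * a) (-a) x := by
        simpa using ((hasDerivAt_id x).sub_const t).neg.mul_const a
      have := (hd.exp.const_mul (-a⁻¹))
      refine this.congr_deriv ?_
      rw [mul_comm (Real.exp _) (-a), ← mul_assoc, neg_mul_neg, inv_mul_cancel₀ ha.ne', one_mul]
    have htendsto : Tendsto (fun s => -a⁻¹ * Real.exp (-(s - t) * a)) atTop (𝓝 0) := by
      have h2 : Tendsto (fun s : ℝ => -(s - t) * a) atTop atBot := by
        have := (tendsto_neg_atTop_atBot.comp
          (tendsto_atTop_add_const_right atTop (-t) tendsto_id)).atBot_mul_const ha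
        simpa [Function.comp, sub_eq_add_neg] using this
      have h3 := Real.tendsto_exp_atBot.comp h2
      simpa using h3.const_mul (-a⁻¹)
    have hcont : ContinuousWithinAt (fun s => -a⁻¹ * Real.exp (-(s - t) * a)) (Ici t) t :=
      (Continuous.continuousWithinAt (by fun_prop))
    have := integral_Ioi_of_hasDerivAt_of_tendsto hcont hderiv hint htendsto
    rw [this]
    simp
  rw [← ofReal_integral_eq_lintegral_ofReal hint
    (ae_of_all _ fun s => (Real.exp_pos _).le), hval]

theorem stmt19 {Ω : Type*} [MeasurableSpace Ω] (μ : Measure Ω) [IsProbabilityMeasure μ]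
    (ξ : ℝ → Ω → ℝ≥0∞) (hmeas : ∀ t, Measurable (ξ t))
    -- ξ is a.s. a non-decreasing càdlàg path started at 0
    (hpaths : ∀ᵐ ω ∂μ, ξ 0 ω = 0 ∧ (∀ s t : ℝ, 0 ≤ s → s ≤ t → ξ s ω ≤ ξ t ω)
      ∧ ∀ t : ℝ, 0 ≤ t → ContinuousWithinAt (fun s => ξ s ω) (Set.Ici t) t)
    -- increments are independent of the past
    (hindep : ∀ s t : ℝ, 0 ≤ s → 0 ≤ t →
      Indep (MeasurableSpace.comap (fun ω => ξ (s + t) ω - ξ s ω) inferInstance)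
        (⨆ u ∈ Set.Icc (0:ℝ) s, MeasurableSpace.comap (ξ u) inferInstance) μ)
    -- increments are stationary
    (hstat : ∀ s t : ℝ, 0 ≤ s → 0 ≤ t →
      Measure.map (fun ω => ξ (s + t) ω - ξ s ω) μ = Measure.map (ξ t) μ)
    -- ψ is the Laplace exponent of ξ
    (ψ : ℝ → ℝ) (hψpos : ∀ l > (0:ℝ), 0 < ψ l)
    (hlaplace : ∀ l t : ℝ, 0 ≤ l → 0 ≤ t →
      ∫ ω, killedExp l (ξ t ω) ∂μ = Real.exp (-t * ψ l))
    (γ : ℝ) (hγ : 0 < γ) (p : ℕ) (hp : 1 ≤ p) :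
    ∫ ω, (∫ r in Set.Ioi (0:ℝ), killedExp γ (ξ r ω)) ^ p ∂μ
      = (p.factorial : ℝ) / ∏ i ∈ Finset.Icc 1 p, ψ (γ * i) := by
  classical
  -- the jointly measurable modification of ξ
  set Z : ℝ → Ω → ℝ≥0∞ := fun t ω => ⨅ q : ℚ, if t < (q : ℝ) then ξ q ω else ⊤ with hZdef
  have hZ : Measurable fun p : ℝ × Ω => Z p.1 p.2 := by
    apply Measurable.iInf
    intro q
    exact Measurable.ite (measurableSet_lt measurable_fst measurable_const)
      ((hmeas q).comp measurable_snd) measurable_const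
  have hgood : ∀ᵐ ω ∂μ, (ξ 0 ω = 0) ∧ (∀ s t : ℝ, 0 ≤ s → s ≤ t → ξ s ω ≤ ξ t ω)
      ∧ (∀ t : ℝ, 0 ≤ t → Z t ω = ξ t ω) := by
    filter_upwards [hpaths] with ω h
    obtain ⟨h0, hmono, hrc⟩ := h
    refine ⟨h0, hmono, fun t ht => le_antisymm ?_ ?_⟩
    · have hex : ∀ n : ℕ, ∃ q : ℚ, t < (q : ℝ) ∧ (q : ℝ) < t + 1 / (n + 1) := fun n =>
        exists_rat_btwn (lt_add_of_pos_right t (by positivity))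
      choose q hq1 hq2 using hex
      have hq3 : Tendsto (fun n : ℕ => ((q n : ℝ))) atTop (𝓝 t) := by
        have h1 : Tendsto (fun n : ℕ => t + 1 / ((n : ℝ) + 1)) atTop (𝓝 t) := by
          simpa using tendsto_const_nhds.add (tendsto_one_div_add_atTop_nhds_zero_nat (𝕜 := ℝ))
        exact tendsto_of_tendsto_of_tendsto_of_le_of_le tendsto_const_nhds h1
          (fun n => (hq1 n).le) (fun n => (hq2 n).le)
      have h4 : Tendsto (fun n => ξ (q n) ω) atTop (𝓝 (ξ t ω)) := by
        apply (hrc t ht).tendsto.comp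
        apply tendsto_nhdsWithin_of_tendsto_nhds_of_eventually_within _ hq3
        exact Eventually.of_forall fun n => (hq1 n).le
      refine ge_of_tendsto h4 (Eventually.of_forall fun n => ?_)
      refine iInf_le_of_le (q n) ?_
      rw [if_pos (hq1 n)]
    · refine le_iInf fun q => ?_
      split_ifs with hq
      · exact hmono t q ht hq.le
      · exact le_top
  -- the filtration
  set F : ℝ → MeasurableSpace Ω :=
    fun t => ⨆ u ∈ Set.Icc (0:ℝ) t, MeasurableSpace.comap (ξ u) inferInstance with hF
  have hFle : ∀ t, F t ≤ ‹MeasurableSpace Ω› := fun t =>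
    iSup₂_le fun u _ => measurable_iff_comap_le.1 (hmeas u)
  have hFmono : ∀ {s t : ℝ}, s ≤ t → F s ≤ F t := by
    intro s t hst
    refine iSup_le fun u => iSup_le fun hu => ?_
    exact le_iSup₂ (f := fun u (_ : u ∈ Set.Icc (0:ℝ) t) =>
      MeasurableSpace.comap (ξ u) inferInstance) u ⟨hu.1, hu.2.trans hst⟩
  have hFmeasξ : ∀ {u t : ℝ}, 0 ≤ u → u ≤ t → Measurable[F t] (ξ u) := by
    intro u t hu hut
    exact measurable_iff_comap_le.2 (le_iSup₂ (f := fun u (_ : u ∈ Set.Icc (0:ℝ) t) =>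
      MeasurableSpace.comap (ξ u) inferInstance) u ⟨hu, hut⟩)
  -- expectation of a killed-exponential of an increment
  have hEinc : ∀ (l : ℝ), 0 ≤ l → ∀ {t s : ℝ}, 0 ≤ t → t ≤ s →
      ∫⁻ ω, se_ge l (ξ s ω - ξ t ω) ∂μ = ENNReal.ofReal (Real.exp (-(s - t) * ψ l)) := by
    intro l hl t s ht hts
    have hΔ : Measurable fun ω => ξ s ω - ξ t ω := (hmeas s).sub (hmeas t)
    have hmap : Measure.map (fun ω => ξ s ω - ξ t ω) μ = Measure.map (ξ (s - t)) μ := by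
      have h := hstat t (s - t) ht (by linarith)
      rw [show t + (s - t) = s by ring] at h
      exact h
    have hintegrable : Integrable (fun ω => killedExp l (ξ (s - t) ω)) μ := by
      refine (integrable_const (1:ℝ)).mono'
        ((se_measurable_killedExp l).comp (hmeas _)).aestronglyMeasurable
        (ae_of_all _ fun ω => ?_)
      rw [Real.norm_eq_abs, abs_of_nonneg (se_killedExp_nonneg _ _)]
      exact se_killedExp_le_one hl _
    calc ∫⁻ ω, se_ge l (ξ s ω - ξ t ω) ∂μ
        = ∫⁻ x, se_ge l x ∂(Measure.map (fun ω => ξ s ω - ξ t ω) μ) :=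
          (lintegral_map (se_measurable_ge l) hΔ).symm
      _ = ∫⁻ x, se_ge l x ∂(Measure.map (ξ (s - t)) μ) := by rw [hmap]
      _ = ∫⁻ ω, se_ge l (ξ (s - t) ω) ∂μ := lintegral_map (se_measurable_ge l) (hmeas _)
      _ = ENNReal.ofReal (∫ ω, killedExp l (ξ (s - t) ω) ∂μ) :=
          (ofReal_integral_eq_lintegral_ofReal hintegrable
            (ae_of_all _ fun ω => se_killedExp_nonneg _ _)).symm
      _ = ENNReal.ofReal (Real.exp (-(s - t) * ψ l)) := by
          rw [hlaplace l (s - t) hl (by linarith)]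
  -- independence of increments from the past, in product form
  have hindep' : ∀ {t s : ℝ}, 0 ≤ t → t ≤ s → ∀ (Y₀ : Ω → ℝ≥0∞), Measurable[F t] Y₀ →
      ∀ (l : ℝ), ∫⁻ ω, Y₀ ω * se_ge l (ξ s ω - ξ t ω) ∂μ
        = (∫⁻ ω, Y₀ ω ∂μ) * ∫⁻ ω, se_ge l (ξ s ω - ξ t ω) ∂μ := by
    intro t s ht hts Y₀ hY₀ l
    have hΔ : Measurable fun ω => ξ s ω - ξ t ω := (hmeas s).sub (hmeas t)
    have hInd : Indep (F t)
        (MeasurableSpace.comap (fun ω => ξ s ω - ξ t ω) inferInstance) μ := by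
      have h := hindep t (s - t) ht (by linarith)
      rw [show t + (s - t) = s by ring] at h
      exact h.symm
    exact lintegral_mul_eq_lintegral_mul_lintegral_of_independent_measurableSpace
      (hFle t) (measurable_iff_comap_le.1 hΔ) hInd hY₀
      ((se_measurable_ge l).comp (Measurable.of_comap_le le_rfl))
  -- the product constant
  set C : ℕ → ℝ≥0∞ :=
    fun n => ∏ i ∈ Finset.Icc 1 n, (ENNReal.ofReal (ψ (γ * i)))⁻¹ with hC
  -- main induction
  have key : ∀ n : ℕ, ∀ t : ℝ, 0 ≤ t → ∀ Y : Ω → ℝ≥0∞, Measurable Y →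
      ∀ Y₀ : Ω → ℝ≥0∞, Measurable[F t] Y₀ → Y =ᵐ[μ] Y₀ →
      ∫⁻ ω, Y ω * se_J Z γ n t ω ∂μ = C n * ∫⁻ ω, Y ω ∂μ := by
    intro n
    induction n with
    | zero =>
      intro t ht Y hY Y₀ hY₀ hYY
      simp [se_J, hC, Finset.Icc_eq_empty_of_lt (Nat.lt_irrefl 0 |> fun _ => Nat.zero_lt_one)]
    | succ n IH =>
      intro t ht Y hY Y₀ hY₀ hYY
      have hlpos : 0 < γ * ((n : ℝ) + 1) := by positivity
      have hψl := hψpos _ hlpos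
      -- joint measurability pieces
      have hZsub : Measurable fun q : ℝ × Ω => Z q.1 q.2 - Z t q.2 :=
        hZ.sub (hZ.comp (measurable_const.prodMk measurable_snd))
      have hJm := se_J_measurable hZ γ n
      -- Tonelli swap
      have hswap : ∫⁻ ω, Y ω * se_J Z γ (n + 1) t ω ∂μ
          = ∫⁻ s in Ioi t, ∫⁻ ω,
              (Y ω * se_ge (γ * (n + 1)) (Z s ω - Z t ω)) * se_J Z γ n s ω ∂μ := by
        have e1 : ∀ ω, Y ω * se_J Z γ (n + 1) t ω
            = ∫⁻ s in Ioi t,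
                (Y ω * se_ge (γ * (n + 1)) (Z s ω - Z t ω)) * se_J Z γ n s ω := by
          intro ω
          have hsec : Measurable fun s : ℝ =>
              se_ge (γ * (n + 1)) (Z s ω - Z t ω) * se_J Z γ n s ω := by
            refine Measurable.mul ?_ ?_
            · exact (se_measurable_ge _).comp
                ((hZ.comp (measurable_id.prodMk measurable_const)).sub measurable_const)
            · exact hJm.comp (measurable_id.prodMk measurable_const)
          have : se_J Z γ (n + 1) t ω
              = ∫⁻ s in Ioi t, se_ge (γ * (n + 1)) (Z s ω - Z t ω) * se_J Z γ n s ω := rfl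
          rw [this, ← lintegral_const_mul _ hsec]
          simp_rw [mul_assoc]
        simp_rw [e1]
        refine lintegral_lintegral_swap ?_
        apply Measurable.aemeasurable
        refine Measurable.mul (Measurable.mul (hY.comp measurable_fst) ?_) ?_
        · exact (se_measurable_ge _).comp
            (hZsub.comp ((measurable_snd.prodMk measurable_fst)))
        · exact hJm.comp (measurable_snd.prodMk measurable_fst)
      rw [hswap]
      -- pointwise identity in s
      have hpt : ∀ s ∈ Ioi t, ∫⁻ ω,
            (Y ω * se_ge (γ * (n + 1)) (Z s ω - Z t ω)) * se_J Z γ n s ω ∂μ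
          = (C n * ENNReal.ofReal (Real.exp (-(s - t) * ψ (γ * ((n:ℝ) + 1)))))
              * ∫⁻ ω, Y ω ∂μ := by
        intro s hs
        have hts : t ≤ s := (le_of_lt hs)
        have hs0 : 0 ≤ s := ht.trans hts
        set Y' : Ω → ℝ≥0∞ := fun ω => Y ω * se_ge (γ * (n + 1)) (Z s ω - Z t ω) with hY'
        set Y₀' : Ω → ℝ≥0∞ := fun ω => Y₀ ω * se_ge (γ * (n + 1)) (ξ s ω - ξ t ω) with hY₀'
        have hY'm : Measurable Y' := hY.mul ((se_measurable_ge _).comp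
          (((hZ.comp (measurable_const.prodMk measurable_id)).sub
            (hZ.comp (measurable_const.prodMk measurable_id)))))
        have hY₀'m : Measurable[F s] Y₀' := by
          refine Measurable.mul (hY₀.mono (hFmono hts) le_rfl) ?_
          exact (se_measurable_ge _).comp ((hFmeasξ hs0 le_rfl).sub (hFmeasξ ht hts))
        have hae : Y' =ᵐ[μ] Y₀' := by
          filter_upwards [hYY, hgood] with ω h1 h2
          show Y ω * se_ge (γ * (n + 1)) (Z s ω - Z t ω)
              = Y₀ ω * se_ge (γ * (n + 1)) (ξ s ω - ξ t ω)
          rw [h1, h2.2.2 s hs0, h2.2.2 t ht]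
        calc ∫⁻ ω, Y' ω * se_J Z γ n s ω ∂μ = C n * ∫⁻ ω, Y' ω ∂μ :=
            IH s hs0 Y' hY'm Y₀' hY₀'m hae
          _ = C n * ∫⁻ ω, Y₀' ω ∂μ := by rw [lintegral_congr_ae hae]
          _ = C n * ((∫⁻ ω, Y₀ ω ∂μ)
              * ∫⁻ ω, se_ge (γ * (n + 1)) (ξ s ω - ξ t ω) ∂μ) := by
            rw [hindep' ht hts Y₀ hY₀]
          _ = C n * ((∫⁻ ω, Y ω ∂μ)
              * ENNReal.ofReal (Real.exp (-(s - t) * ψ (γ * ((n:ℝ) + 1))))) := by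
            rw [lintegral_congr_ae hYY, hEinc _ hlpos.le ht hts]
          _ = (C n * ENNReal.ofReal (Real.exp (-(s - t) * ψ (γ * ((n:ℝ) + 1)))))
              * ∫⁻ ω, Y ω ∂μ := by ring
      rw [setLIntegral_congr_fun measurableSet_Ioi hpt]
      have hexp : ∫⁻ s in Ioi t,
          ENNReal.ofReal (Real.exp (-(s - t) * ψ (γ * ((n:ℝ) + 1))))
            = ENNReal.ofReal (ψ (γ * ((n:ℝ) + 1)))⁻¹ := se_lintegral_exp t hψl
      have hmeasE : Measurable fun s : ℝ =>
          ENNReal.ofReal (Real.exp (-(s - t) * ψ (γ * ((n:ℝ) + 1)))) := by fun_prop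
      calc ∫⁻ s in Ioi t, (C n * ENNReal.ofReal (Real.exp (-(s - t) * ψ (γ * ((n:ℝ) + 1)))))
              * ∫⁻ ω, Y ω ∂μ
          = ∫⁻ s in Ioi t, (C n * ∫⁻ ω, Y ω ∂μ)
              * ENNReal.ofReal (Real.exp (-(s - t) * ψ (γ * ((n:ℝ) + 1)))) := by
            refine setLIntegral_congr_fun measurableSet_Ioi (fun s _ => ?_); ring
        _ = (C n * ∫⁻ ω, Y ω ∂μ) * ENNReal.ofReal (ψ (γ * ((n:ℝ) + 1)))⁻¹ := by
            rw [lintegral_const_mul _ hmeasE, hexp]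
        _ = C (n + 1) * ∫⁻ ω, Y ω ∂μ := by
            have hCsucc : C (n + 1) = C n * (ENNReal.ofReal (ψ (γ * ((n:ℝ) + 1))))⁻¹ := by
              show (∏ i ∈ Finset.Icc 1 (n + 1), (ENNReal.ofReal (ψ (γ * i)))⁻¹)
                  = (∏ i ∈ Finset.Icc 1 n, (ENNReal.ofReal (ψ (γ * i)))⁻¹)
                    * (ENNReal.ofReal (ψ (γ * ((n:ℝ) + 1))))⁻¹
              rw [Finset.prod_Icc_succ_top (Nat.le_add_left 1 n)]
              push_cast
              ring_nf
            rw [hCsucc, ENNReal.ofReal_inv_of_pos hψl]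
            ring
  -- the modified exponential functional
  set L : Ω → ℝ≥0∞ := fun ω => ∫⁻ r in Ioi (0:ℝ), se_ge γ (Z r ω) with hL
  have hLmeas : Measurable L := by
    have h : L = fun ω => ∫⁻ r, (Ioi (0:ℝ)).indicator (fun r => se_ge γ (Z r ω)) r :=
      funext fun ω => (lintegral_indicator measurableSet_Ioi _).symm
    rw [h]
    apply Measurable.lintegral_prod_right' (f := fun q : Ω × ℝ =>
      (Ioi (0:ℝ)).indicator (fun r => se_ge γ (Z r q.1)) q.2)
    simp_rw [Set.indicator_apply, mem_Ioi]
    refine Measurable.ite (measurableSet_lt measurable_const measurable_snd) ?_ measurable_const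
    exact (se_measurable_ge γ).comp (hZ.comp (measurable_snd.prodMk measurable_fst))
  -- a.s. identification of L^p with p! * J p 0
  have hJL : ∀ᵐ ω ∂μ, (p.factorial : ℝ≥0∞) * se_J Z γ p 0 ω = L ω ^ p := by
    filter_upwards [hgood] with ω hω
    have hmono' : ∀ u v : ℝ, 0 ≤ u → u ≤ v → Z u ω ≤ Z v ω := by
      intro u v hu huv
      rw [hω.2.2 u hu, hω.2.2 v (hu.trans huv)]
      exact hω.2.1 u v hu huv
    rw [se_J_eq_pow hZ γ hmono' p 0 le_rfl]
    have hz0 : Z 0 ω = 0 := by rw [hω.2.2 0 le_rfl, hω.1]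
    rw [hz0]
    simp [hL]
  -- value of the lintegral of L^p
  have hVal : ∫⁻ ω, L ω ^ p ∂μ = (p.factorial : ℝ≥0∞) * C p := by
    calc ∫⁻ ω, L ω ^ p ∂μ
        = ∫⁻ ω, (p.factorial : ℝ≥0∞) * se_J Z γ p 0 ω ∂μ := (lintegral_congr_ae hJL).symm
      _ = (p.factorial : ℝ≥0∞) * ∫⁻ ω, se_J Z γ p 0 ω ∂μ :=
          lintegral_const_mul' _ _ (ENNReal.natCast_ne_top _)
      _ = (p.factorial : ℝ≥0∞) * (C p * ∫⁻ _, (1:ℝ≥0∞) ∂μ) := by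
          have h1 := key p 0 le_rfl (fun _ => 1) measurable_const (fun _ => 1)
            measurable_const (Filter.EventuallyEq.refl _ _)
          simp only [one_mul] at h1
          rw [h1]
      _ = (p.factorial : ℝ≥0∞) * C p := by simp
  have hCfin : C p ≠ ∞ := by
    rw [hC]
    refine (ENNReal.prod_lt_top fun i hi => ?_).ne
    rw [Finset.mem_Icc] at hi
    have hipos : (0:ℝ) < γ * i := by
      have : (1:ℝ) ≤ (i:ℝ) := by exact_mod_cast hi.1
      nlinarith
    simp [ENNReal.inv_lt_top, ENNReal.ofReal_pos.2 (hψpos _ hipos)]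
  have hfin : ∫⁻ ω, L ω ^ p ∂μ ≠ ∞ := by
    rw [hVal]
    exact ENNReal.mul_ne_top (ENNReal.natCast_ne_top _) hCfin
  have haefin : ∀ᵐ ω ∂μ, L ω < ∞ := by
    filter_upwards [ae_lt_top (hLmeas.pow_const p) hfin] with ω hω
    by_contra h
    rw [not_lt, top_le_iff] at h
    rw [h, ENNReal.top_pow (by omega)] at hω
    exact absurd hω (lt_irrefl _)
  -- identification of the inner Bochner integral
  have hinner : ∀ᵐ ω ∂μ, ∫ r in Ioi (0:ℝ), killedExp γ (ξ r ω) = (L ω).toReal := by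
    filter_upwards [hgood] with ω hω
    have hsec : Measurable fun r : ℝ => killedExp γ (Z r ω) :=
      (se_measurable_killedExp γ).comp (hZ.comp (measurable_id.prodMk measurable_const))
    have hae : (fun r => killedExp γ (ξ r ω))
        =ᵐ[volume.restrict (Ioi (0:ℝ))] fun r => killedExp γ (Z r ω) := by
      filter_upwards [self_mem_ae_restrict measurableSet_Ioi] with r hr
      rw [hω.2.2 r (le_of_lt hr)]
    rw [integral_congr_ae hae,
      integral_eq_lintegral_of_nonneg_ae (ae_of_all _ fun r => se_killedExp_nonneg γ _)
        hsec.aestronglyMeasurable]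
    rfl
  -- final computation
  calc ∫ ω, (∫ r in Ioi (0:ℝ), killedExp γ (ξ r ω)) ^ p ∂μ
      = ∫ ω, (L ω ^ p).toReal ∂μ := by
        refine integral_congr_ae ?_
        filter_upwards [hinner] with ω h
        rw [h, ENNReal.toReal_pow]
    _ = (∫⁻ ω, L ω ^ p ∂μ).toReal := by
        refine integral_toReal ((hLmeas.pow_const p).aemeasurable) ?_
        filter_upwards [haefin] with ω h
        exact ENNReal.pow_lt_top h
    _ = ((p.factorial : ℝ≥0∞) * C p).toReal := by rw [hVal]
    _ = (p.factorial : ℝ) / ∏ i ∈ Finset.Icc 1 p, ψ (γ * i) := by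
        rw [ENNReal.toReal_mul, ENNReal.toReal_natCast, hC, ENNReal.toReal_prod]
        rw [div_eq_mul_inv, ← Finset.prod_inv_distrib]
        congr 1
        refine Finset.prod_congr rfl fun i hi => ?_
        rw [Finset.mem_Icc] at hi
        have hipos : (0:ℝ) < γ * i := by
          have : (1:ℝ) ≤ (i:ℝ) := by exact_mod_cast hi.1
          nlinarith
        rw [ENNReal.toReal_inv, ENNReal.toReal_ofReal (hψpos _ hipos).le]
end
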